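/- Let 0 < α ≤ 1, β > 0 and t > 0. If f : [0,∞) → ℝ is differentiable at t in the classical sense, then f is α-differentiable at t in the sense of the local M-derivative and 𝒟_M^{α,β} f(t) = (t^{1−α} / Γ(β+1)) · f'(t). -/

import Mathlib

open Filter Topology

/-- One-parameter Mittag-Leffler function `E_β(x) = ∑_{k=0}^∞ x^k / Γ(βk+1)`. -/
noncomputable def mittagLeffler (β x : ℝ) : ℝ :=
  ∑' k : ℕ, x ^ k / Real.Gamma (β * k + 1)

/-- `f` has local M-derivative `L` of order `α` with parameter `β` at `t`, i.e.
`lim_{ε→0} (f (t · E_β (ε t^{-α})) - f t)/ε = L`. -/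
def HasLocalMDerivAt (α β : ℝ) (f : ℝ → ℝ) (t L : ℝ) : Prop :=
  Tendsto (fun ε : ℝ => (f (t * mittagLeffler β (ε * t ^ (-α))) - f t) / ε)
    (𝓝[≠] (0 : ℝ)) (𝓝 L)

/-- Gamma is bounded below by a positive constant on `[1, ∞)`. -/
lemma gamma_lower_bound : ∃ m : ℝ, 0 < m ∧ ∀ x : ℝ, 1 ≤ x → m ≤ Real.Gamma x := by
  have hcont : ContinuousOn Real.Gamma (Set.Icc (1 : ℝ) 3) := by
    intro x hx
    refine (Real.differentiableAt_Gamma fun m => ?_).continuousAt.continuousWithinAt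
    have : (0 : ℝ) < x := lt_of_lt_of_le one_pos hx.1
    have : (-(m : ℝ)) ≤ 0 := neg_nonpos.mpr (Nat.cast_nonneg m)
    linarith [hx.1]
  obtain ⟨x₀, hx₀, hmin⟩ := (isCompact_Icc (a := (1:ℝ)) (b := 3)).exists_isMinOn
    (Set.nonempty_Icc.mpr (by norm_num)) hcont
  refine ⟨Real.Gamma x₀, Real.Gamma_pos_of_pos (lt_of_lt_of_le one_pos hx₀.1), fun x hx => ?_⟩
  rcases le_or_gt x 3 with h3 | h3
  · exact hmin ⟨hx, h3⟩
  · have h1 : Real.Gamma x₀ ≤ Real.Gamma 3 := hmin (by norm_num : (3:ℝ) ∈ Set.Icc (1:ℝ) 3)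
    refine h1.trans ?_
    exact le_of_lt (Real.Gamma_strictMonoOn_Ici (by norm_num) (Set.mem_Ici.mpr (by linarith))
      (by linarith))

/-- The Mittag-Leffler function as a scalar power-series sum. -/
lemma mittagLeffler_eq_ofScalarsSum (β : ℝ) :
    mittagLeffler β = FormalMultilinearSeries.ofScalarsSum
      (E := ℝ) (fun k : ℕ => (Real.Gamma (β * k + 1))⁻¹) := by
  funext x
  rw [FormalMultilinearSeries.ofScalars_sum_eq, mittagLeffler]
  refine tsum_congr fun k => ?_
  rw [smul_eq_mul, div_eq_inv_mul]

/-- The Mittag-Leffler function is differentiable at 0 with derivative `1/Γ(β+1)`. -/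
lemma hasDerivAt_mittagLeffler (β : ℝ) (hβ : 0 < β) :
    HasDerivAt (mittagLeffler β) (Real.Gamma (β + 1))⁻¹ 0 := by
  set c : ℕ → ℝ := fun k => (Real.Gamma (β * k + 1))⁻¹ with hc
  set p := FormalMultilinearSeries.ofScalars ℝ c with hp
  obtain ⟨m, hm, hmle⟩ := gamma_lower_bound
  have hrad : 0 < p.radius := by
    have h1 : (1 : ENNReal) ≤ p.radius := by
      have := p.le_radius_of_bound m⁻¹ (r := 1) (fun n => ?_)
      · simpa using this
      · rw [NNReal.coe_one, one_pow, mul_one]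
        have hpn : ‖p n‖ ≤ ‖c n‖ * ‖ContinuousMultilinearMap.mkPiAlgebraFin ℝ n ℝ‖ := by
          rw [hp]
          exact (norm_smul (c n) (ContinuousMultilinearMap.mkPiAlgebraFin ℝ n ℝ)).le
        have hfin : ‖ContinuousMultilinearMap.mkPiAlgebraFin ℝ n ℝ‖ ≤ 1 := by
          refine ContinuousMultilinearMap.norm_mkPiAlgebraFin_le.trans ?_
          simp
        have hGamma : m ≤ Real.Gamma (β * n + 1) := by
          refine hmle _ ?_
          have : (0 : ℝ) ≤ β * n := by positivity
          linarith
        have hcn : ‖c n‖ ≤ m⁻¹ := by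
          rw [hc]
          have hpos : 0 < Real.Gamma (β * n + 1) := lt_of_lt_of_le hm hGamma
          rw [Real.norm_eq_abs, abs_of_pos (by positivity)]
          exact inv_anti₀ hm hGamma
        calc ‖p n‖ ≤ ‖c n‖ * ‖ContinuousMultilinearMap.mkPiAlgebraFin ℝ n ℝ‖ := hpn
          _ ≤ ‖c n‖ * 1 := by
              refine mul_le_mul_of_nonneg_left hfin (norm_nonneg _)
          _ = ‖c n‖ := mul_one _
          _ ≤ m⁻¹ := hcn
    exact lt_of_lt_of_le (by norm_num) h1
  have hball := p.hasFPowerSeriesOnBall hrad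
  have hat : HasFPowerSeriesAt (mittagLeffler β) p 0 := by
    rw [mittagLeffler_eq_ofScalarsSum]
    exact hball.hasFPowerSeriesAt
  have := hat.hasDerivAt
  refine this.congr_deriv ?_
  rw [hp, FormalMultilinearSeries.ofScalars_apply_eq, hc]
  norm_num

/-- if `f` is classically differentiable at `t > 0`, then it is
α-differentiable there and `𝒟_M^{α,β} f(t) = (t^{1-α}/Γ(β+1)) f'(t)`. -/
theorem stmt5 (α β t : ℝ) (hα0 : 0 < α) (hα1 : α ≤ 1) (hβ : 0 < β) (ht : 0 < t)
    (f : ℝ → ℝ) (f' : ℝ) (hf : HasDerivAt f f' t) :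
    HasLocalMDerivAt α β f t (t ^ (1 - α) / Real.Gamma (β + 1) * f') := by
  -- the inner function g(ε) = t * E_β(ε t^(-α))
  set g : ℝ → ℝ := fun ε => t * mittagLeffler β (ε * t ^ (-α)) with hgdef
  have hE0 : mittagLeffler β 0 = 1 := by
    rw [mittagLeffler_eq_ofScalarsSum]
    rw [FormalMultilinearSeries.ofScalarsSum_zero]
    norm_num
  have hg0 : g 0 = t := by simp [hgdef, hE0]
  -- derivative of inner argument ε ↦ ε * t^(-α) at 0
  have hlin : HasDerivAt (fun ε : ℝ => ε * t ^ (-α)) (t ^ (-α)) 0 :=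
    hasDerivAt_mul_const _
  have hEcomp : HasDerivAt (fun ε : ℝ => mittagLeffler β (ε * t ^ (-α)))
      ((Real.Gamma (β + 1))⁻¹ * t ^ (-α)) 0 := by
    have hML : HasDerivAt (mittagLeffler β) (Real.Gamma (β + 1))⁻¹
        ((fun ε : ℝ => ε * t ^ (-α)) 0) := by
      simpa using hasDerivAt_mittagLeffler β hβ
    exact hML.comp 0 hlin
  have hgderiv : HasDerivAt g (t * ((Real.Gamma (β + 1))⁻¹ * t ^ (-α))) 0 :=
    hEcomp.const_mul t
  have hfg : HasDerivAt (fun ε => f (g ε)) (f' * (t * ((Real.Gamma (β + 1))⁻¹ * t ^ (-α)))) 0 := by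
    have := (hg0 ▸ hf : HasDerivAt f f' (g 0)).comp 0 hgderiv
    exact this
  have hval : f' * (t * ((Real.Gamma (β + 1))⁻¹ * t ^ (-α)))
      = t ^ (1 - α) / Real.Gamma (β + 1) * f' := by
    have ht1 : t * t ^ (-α) = t ^ (1 - α) := by
      rw [show (1:ℝ) - α = 1 + (-α) by ring, Real.rpow_add ht, Real.rpow_one]
    field_simp
    rw [← ht1]
    ring
  rw [HasLocalMDerivAt]
  have := hasDerivAt_iff_tendsto_slope.mp hfg
  rw [hval] at this
  refine this.congr fun ε => ?_
  simp [slope_def_field, hg0, hgdef, hE0]
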